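/- arXiv:2407.17769 — 4 statements merged into one kernel-verified Lean document; each statement's English description precedes it below -/
import Mathlib

section
/- For any α < -1 and any S ∈ (0, ∞), there exists a constant C > 0 such that for all s ∈ (0, S), ∫₀ˢ τ⁻¹ (log(e + τ⁻¹))^α dτ ≤ C (log(e + s⁻¹))^{α+1}. -/
open MeasureTheory ENNReal Set

noncomputable def Phi (s : ℝ) : ℝ := Real.log (Real.exp 1 + s)

lemma one_le_Phi {x : ℝ} (hx : 0 ≤ x) : 1 ≤ Phi x := by
  have h : Real.exp 1 ≤ Real.exp 1 + x := by linarith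
  calc (1:ℝ) = Real.log (Real.exp 1) := (Real.log_exp 1).symm
  _ ≤ Phi x := Real.log_le_log (Real.exp_pos 1) h

theorem stmt1 (α S : ℝ) (hα : α < -1) (hS : 0 < S) :
    ∃ C : ℝ, 0 < C ∧ ∀ s : ℝ, 0 < s → s < S →
      (∫⁻ τ in Set.Ioo (0 : ℝ) s, ENNReal.ofReal (τ⁻¹ * Phi τ⁻¹ ^ α)) ≤
        ENNReal.ofReal (C * Phi s⁻¹ ^ (α + 1)) := by
  have hα1 : 0 < -(α+1) := by linarith
  have hα1' : α + 1 ≠ 0 := by intro h; rw [h] at hα1; simp at hα1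
  have hE : (0:ℝ) < Real.exp 1 := Real.exp_pos 1
  set c : ℝ := (Real.exp 1 * S + 1) / (-(α+1)) with hc_def
  have hcpos : 0 < c := by
    apply div_pos; nlinarith; exact hα1
  refine ⟨c, hcpos, ?_⟩
  intro s hs hsS
  set f : ℝ → ℝ := fun τ => τ⁻¹ * Phi τ⁻¹ ^ α with hf_def
  set g : ℝ → ℝ := fun τ => c * Phi τ⁻¹ ^ (α+1) with hg_def
  set g' : ℝ → ℝ := fun τ =>
    (Real.exp 1 * S + 1) * (Phi τ⁻¹ ^ α / ((Real.exp 1 + τ⁻¹) * τ^2)) with hg'_def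
  -- positivity facts
  have hPhi_pos : ∀ τ : ℝ, 0 < τ → 0 < Phi τ⁻¹ := fun τ hτ =>
    lt_of_lt_of_le one_pos (one_le_Phi (le_of_lt (inv_pos.2 hτ)))
  have hEt_pos : ∀ τ : ℝ, 0 < τ → 0 < Real.exp 1 + τ⁻¹ := fun τ hτ => by
    have := inv_pos.2 hτ; linarith
  -- derivative
  have hderiv : ∀ τ : ℝ, 0 < τ → HasDerivAt g (g' τ) τ := by
    intro τ hτ
    have hτ0 : τ ≠ 0 := ne_of_gt hτ
    have h1 : HasDerivAt (fun τ : ℝ => τ⁻¹) (-(τ^2)⁻¹) τ := hasDerivAt_inv hτ0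
    have h2 : HasDerivAt (fun τ : ℝ => Real.exp 1 + τ⁻¹) (-(τ^2)⁻¹) τ := h1.const_add _
    have h3 : HasDerivAt (fun τ : ℝ => Real.log (Real.exp 1 + τ⁻¹))
        ((Real.exp 1 + τ⁻¹)⁻¹ * (-(τ^2)⁻¹)) τ :=
      by have := (Real.hasDerivAt_log (ne_of_gt (hEt_pos τ hτ))).comp τ h2; exact this
    have h4 : HasDerivAt (fun y : ℝ => y ^ (α+1)) ((α+1) * (Phi τ⁻¹) ^ α) (Phi τ⁻¹) := by
      have := Real.hasDerivAt_rpow_const (p := α+1) (Or.inl (ne_of_gt (hPhi_pos τ hτ)))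
      simpa using this
    have h5 : HasDerivAt (fun y => c * ((fun y : ℝ => y ^ (α + 1)) ∘ fun τ : ℝ => Real.log (Real.exp 1 + τ⁻¹)) y)
        (c * ((α + 1) * Phi τ⁻¹ ^ α * ((Real.exp 1 + τ⁻¹)⁻¹ * -(τ ^ 2)⁻¹))) τ := (h4.comp τ h3).const_mul c
    convert h5 using 1
    · rfl
    have hne : -(α+1) ≠ 0 := ne_of_gt hα1
    have hdc : c * (α+1) = -(Real.exp 1 * S + 1) := by
      rw [hc_def, div_mul_eq_mul_div, div_eq_iff hne]; ring
    show (Real.exp 1 * S + 1) * (Phi τ⁻¹ ^ α / ((Real.exp 1 + τ⁻¹) * τ^2)) = _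
    rw [div_eq_mul_inv, mul_inv]
    linear_combination (Phi τ⁻¹ ^ α * ((Real.exp 1 + τ⁻¹)⁻¹ * (τ ^ 2)⁻¹)) * hdc
  -- pointwise bound f ≤ g' on (0, S)
  have hfg' : ∀ τ : ℝ, 0 < τ → τ ≤ S → f τ ≤ g' τ := by
    intro τ hτ hτS
    have hP : (0:ℝ) < Phi τ⁻¹ ^ α := Real.rpow_pos_of_pos (hPhi_pos τ hτ) α
    have hD : (0:ℝ) < (Real.exp 1 + τ⁻¹) * τ^2 := by
      have := hEt_pos τ hτ; positivity
    rw [hf_def, hg'_def]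
    simp only
    rw [mul_div_assoc', le_div_iff₀ hD]
    have key : τ⁻¹ * ((Real.exp 1 + τ⁻¹) * τ^2) = Real.exp 1 * τ + 1 := by
      field_simp
    calc τ⁻¹ * Phi τ⁻¹ ^ α * ((Real.exp 1 + τ⁻¹) * τ^2)
        = (Real.exp 1 * τ + 1) * Phi τ⁻¹ ^ α := by rw [mul_right_comm, key]
      _ ≤ (Real.exp 1 * S + 1) * Phi τ⁻¹ ^ α :=
          mul_le_mul_of_nonneg_right (by nlinarith) hP.le
  -- continuity
  have hcont : ∀ a b : ℝ, 0 < a → ContinuousOn f (Icc a b) := by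
    intro a b ha
    apply ContinuousOn.mul
    · exact ContinuousOn.inv₀ continuousOn_id (fun x hx => by
        have := hx.1; intro h; rw [h] at this; linarith)
    · apply ContinuousOn.rpow_const
      · apply Real.continuousOn_log.comp
        · exact ContinuousOn.add continuousOn_const (ContinuousOn.inv₀ continuousOn_id
            (fun x hx => by have := hx.1; intro h; rw [h] at this; linarith))
        · intro x hx
          have hx0 : 0 < x := lt_of_lt_of_le ha hx.1
          exact ne_of_gt (hEt_pos x hx0)
      · intro x hx
        have hx0 : 0 < x := lt_of_lt_of_le ha hx.1
        exact Or.inl (ne_of_gt (hPhi_pos x hx0))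
  have hcontg' : ∀ a b : ℝ, 0 < a → ContinuousOn g' (Icc a b) := by
    intro a b ha
    apply ContinuousOn.mul continuousOn_const
    apply ContinuousOn.div
    · apply ContinuousOn.rpow_const
      · apply Real.continuousOn_log.comp
        · exact ContinuousOn.add continuousOn_const (ContinuousOn.inv₀ continuousOn_id
            (fun x hx => by have := hx.1; intro h; rw [h] at this; linarith))
        · intro x hx
          have hx0 : 0 < x := lt_of_lt_of_le ha hx.1
          exact ne_of_gt (hEt_pos x hx0)
      · intro x hx
        have hx0 : 0 < x := lt_of_lt_of_le ha hx.1
        exact Or.inl (ne_of_gt (hPhi_pos x hx0))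
    · apply ContinuousOn.mul
      · exact ContinuousOn.add continuousOn_const (ContinuousOn.inv₀ continuousOn_id
          (fun x hx => by have := hx.1; intro h; rw [h] at this; linarith))
      · exact (continuous_pow 2).continuousOn
    · intro x hx
      have hx0 : 0 < x := lt_of_lt_of_le ha hx.1
      have := hEt_pos x hx0
      positivity
  -- the bound for each truncation
  have hbound : ∀ ε : ℝ, 0 < ε → ε < s →
      (∫⁻ τ in Set.Ioo ε s, ENNReal.ofReal (f τ)) ≤ ENNReal.ofReal (g s) := by
    intro ε hε hεs
    have hεs' : ε ≤ s := le_of_lt hεs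
    have hIcc : Set.uIcc ε s = Set.Icc ε s := Set.uIcc_of_le hεs'
    have hintf : IntervalIntegrable f volume ε s := by
      rw [intervalIntegrable_iff_integrableOn_Icc_of_le hεs']
      exact (hcont ε s hε).integrableOn_Icc
    have hintg' : IntervalIntegrable g' volume ε s := by
      rw [intervalIntegrable_iff_integrableOn_Icc_of_le hεs']
      exact (hcontg' ε s hε).integrableOn_Icc
    have hfint : IntegrableOn f (Set.Ioo ε s) := by
      exact ((hcont ε s hε).integrableOn_Icc).mono_set Set.Ioo_subset_Icc_self
    have step1 : (∫⁻ τ in Set.Ioo ε s, ENNReal.ofReal (f τ)) = ENNReal.ofReal (∫ τ in Set.Ioo ε s, f τ) := by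
      rw [← ofReal_integral_eq_lintegral_ofReal hfint]
      filter_upwards [ae_restrict_mem measurableSet_Ioo] with x hx
      have hx0 : 0 < x := lt_trans hε hx.1
      have := Real.rpow_pos_of_pos (hPhi_pos x hx0) α
      have := inv_pos.2 hx0
      positivity
    rw [step1]
    apply ENNReal.ofReal_le_ofReal
    have e1 : ∫ τ in Set.Ioo ε s, f τ = ∫ τ in ε..s, f τ := by
      rw [intervalIntegral.integral_of_le hεs', integral_Ioc_eq_integral_Ioo]
    rw [e1]
    have e2 : ∫ τ in ε..s, g' τ = g s - g ε :=
      intervalIntegral.integral_eq_sub_of_hasDerivAt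
        (fun x hx => hderiv x (by rw [hIcc] at hx; exact lt_of_lt_of_le hε hx.1)) hintg'
    have e3 : ∫ τ in ε..s, f τ ≤ ∫ τ in ε..s, g' τ := by
      apply intervalIntegral.integral_mono_on hεs' hintf hintg'
      intro x hx
      exact hfg' x (lt_of_lt_of_le hε hx.1) (le_trans hx.2 (le_of_lt hsS))
    have hgε : 0 ≤ g ε := by
      have := Real.rpow_nonneg (le_of_lt (hPhi_pos ε hε)) (α+1)
      rw [hg_def]; positivity
    calc ∫ τ in ε..s, f τ ≤ g s - g ε := by rw [← e2]; exact e3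
      _ ≤ g s := by linarith
  -- measurability of the integrand
  have hmeas : Measurable (fun τ : ℝ => ENNReal.ofReal (f τ)) := by
    apply ENNReal.measurable_ofReal.comp
    exact measurable_inv.mul
      ((Real.measurable_log.comp (measurable_const.add measurable_inv)).pow measurable_const)
  -- AECover argument
  have hcover : AECover (volume.restrict (Set.Ioo (0:ℝ) s)) Filter.atTop
      (fun n : ℕ => Set.Ioi (s / (n + 2))) := by
    constructor
    · filter_upwards [ae_restrict_mem measurableSet_Ioo] with x hx
      obtain ⟨n, hn⟩ := exists_nat_gt (s / x)
      filter_upwards [Filter.eventually_ge_atTop n] with m hm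
      have hx0 : 0 < x := hx.1
      have h2 : s / x < (m:ℝ) + 2 := by
        have : (n:ℝ) ≤ m := Nat.cast_le.2 hm
        linarith
      have hm2 : (0:ℝ) < (m:ℝ) + 2 := by positivity
      show s / ((m:ℝ) + 2) < x
      rw [div_lt_iff₀ hm2]
      rw [div_lt_iff₀ hx0] at h2
      linarith
    · intro n; exact measurableSet_Ioi
  have htendsto := hcover.lintegral_tendsto_of_nat hmeas.aemeasurable
  apply le_of_tendsto' htendsto
  intro n
  have hm2 : (0:ℝ) < (n:ℝ) + 2 := by positivity
  have hεpos : 0 < s / ((n:ℝ) + 2) := div_pos hs hm2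
  have hεlt : s / ((n:ℝ) + 2) < s := by
    rw [div_lt_iff₀ hm2]; nlinarith
  have hre : (∫⁻ x in Set.Ioi (s / ((n:ℝ)+2)), ENNReal.ofReal (f x) ∂(volume.restrict (Set.Ioo (0:ℝ) s)))
      = ∫⁻ x in Set.Ioo (s / ((n:ℝ)+2)) s, ENNReal.ofReal (f x) := by
    have hset : Set.Ioi (s / ((n:ℝ)+2)) ∩ Set.Ioo 0 s = Set.Ioo (s / ((n:ℝ)+2)) s := by
      ext x
      simp only [Set.mem_inter_iff, Set.mem_Ioi, Set.mem_Ioo]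
      constructor
      · rintro ⟨h1, h2, h3⟩; exact ⟨h1, h3⟩
      · rintro ⟨h1, h2⟩; exact ⟨h1, lt_trans hεpos h1, h2⟩
    rw [Measure.restrict_restrict measurableSet_Ioi, hset]
  rw [hre]
  exact hbound _ hεpos hεlt
end

section
/- Let q, q₁, q₂ ∈ [1, ∞) and α, α₁, α₂ ∈ [0, ∞) satisfy 1/q = 1/q₁ + 1/q₂ and α/q = α₁/q₁ + α₂/q₂. Then there exists a constant C > 0 such that for all measurable functions f, g on ℝ^N, ‖fg‖_{L^{q,∞}(log L)^α} ≤ C ‖f‖_{L^{q₁,∞}(log L)^{α₁}} ‖g‖_{L^{q₂,∞}(log L)^{α₂}}. -/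
open MeasureTheory ENNReal Set

/-- The non-increasing rearrangement of `f`, with `inf ∅ = ∞`. -/
noncomputable def rearr {E : Type*} [MeasureSpace E] (f : E → ℝ) (s : ℝ) : ℝ≥0∞ :=
  sInf {l : ℝ≥0∞ | volume {x | l < (‖f x‖₊ : ℝ≥0∞)} ≤ ENNReal.ofReal s}

/-- The weak Zygmund norm `‖f‖_{L^{q,∞}(log L)^α}`. -/
noncomputable def wkNorm {E : Type*} [MeasureSpace E] (f : E → ℝ) (q α : ℝ) : ℝ≥0∞ :=
  ⨆ (s : ℝ) (_ : 0 < s),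
    (ENNReal.ofReal s * ENNReal.ofReal (Phi s⁻¹ ^ α) * rearr f s ^ q) ^ (1 / q)

lemma Phi_mono {x y : ℝ} (hx : 0 ≤ x) (hxy : x ≤ y) : Phi x ≤ Phi y :=
  Real.log_le_log (by positivity) (by linarith)

/-- The infimum defining the rearrangement is attained: the measure of the superlevel set at
level `rearr f s` is itself at most `ofReal s`. -/
lemma rearr_mem {E : Type*} [MeasureSpace E] (f : E → ℝ) (s : ℝ) :
    volume {x | rearr f s < (‖f x‖₊ : ℝ≥0∞)} ≤ ENNReal.ofReal s := by
  set S := {l : ℝ≥0∞ | volume {x | l < (‖f x‖₊ : ℝ≥0∞)} ≤ ENNReal.ofReal s} with hS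
  have hr : rearr f s = sInf S := rfl
  by_cases htop : sInf S = ⊤
  · rw [hr, htop]
    have : {x : E | (⊤ : ℝ≥0∞) < (‖f x‖₊ : ℝ≥0∞)} = ∅ := by
      ext x; simp
    rw [this, measure_empty]
    exact zero_le
  · set a := sInf S with ha
    rw [hr]
    -- express the superlevel set as a monotone union
    have hset : {x : E | a < (‖f x‖₊ : ℝ≥0∞)} =
        ⋃ n : ℕ, {x : E | a + ((n : ℝ≥0∞))⁻¹ < (‖f x‖₊ : ℝ≥0∞)} := by
      ext x
      simp only [mem_setOf_eq, mem_iUnion]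
      constructor
      · intro h
        obtain ⟨r, hr0, hra⟩ := ENNReal.lt_iff_exists_add_pos_lt.mp h
        obtain ⟨n, hn⟩ := ENNReal.exists_inv_nat_lt (by exact_mod_cast hr0.ne' : (r : ℝ≥0∞) ≠ 0)
        exact ⟨n, lt_of_lt_of_le (ENNReal.add_lt_add_left htop hn) (le_of_lt hra) |>.trans_le le_rfl⟩
      · rintro ⟨n, hn⟩
        exact lt_of_le_of_lt (le_add_right le_rfl) hn
    rw [hset]
    have hdir : Directed (· ⊆ ·) (fun n : ℕ =>
        {x : E | a + ((n : ℝ≥0∞))⁻¹ < (‖f x‖₊ : ℝ≥0∞)}) := by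
      apply Monotone.directed_le
      intro m n hmn x hx
      simp only [mem_setOf_eq] at hx ⊢
      refine lt_of_le_of_lt (add_le_add_right ?_ a) hx
      exact ENNReal.inv_le_inv.mpr (by exact_mod_cast hmn)
    rw [hdir.measure_iUnion]
    apply iSup_le
    intro n
    have hlt : a < a + ((n : ℝ≥0∞))⁻¹ :=
      ENNReal.lt_add_right htop (by simp)
    obtain ⟨l, hlS, hl⟩ := sInf_lt_iff.mp (ha ▸ hlt)
    calc volume {x : E | a + ((n : ℝ≥0∞))⁻¹ < (‖f x‖₊ : ℝ≥0∞)}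
        ≤ volume {x : E | l < (‖f x‖₊ : ℝ≥0∞)} := by
          apply measure_mono
          intro x hx
          exact lt_trans hl hx
      _ ≤ ENNReal.ofReal s := hlS

/-- Submultiplicativity of the rearrangement. -/
lemma rearr_submul {E : Type*} [MeasureSpace E] (f g : E → ℝ) {t : ℝ} (ht : 0 ≤ t) :
    rearr (fun x => f x * g x) (t + t) ≤ rearr f t * rearr g t := by
  apply sInf_le
  show volume {x | rearr f t * rearr g t < (‖f x * g x‖₊ : ℝ≥0∞)} ≤ ENNReal.ofReal (t + t)
  have hsub : {x | rearr f t * rearr g t < (‖f x * g x‖₊ : ℝ≥0∞)} ⊆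
      {x | rearr f t < (‖f x‖₊ : ℝ≥0∞)} ∪ {x | rearr g t < (‖g x‖₊ : ℝ≥0∞)} := by
    intro x hx
    simp only [mem_setOf_eq, nnnorm_mul, ENNReal.coe_mul] at hx
    by_contra hc
    simp only [mem_union, mem_setOf_eq, not_or, not_lt] at hc
    exact absurd hx (not_lt.mpr (mul_le_mul' hc.1 hc.2))
  calc volume {x | rearr f t * rearr g t < (‖f x * g x‖₊ : ℝ≥0∞)}
      ≤ volume ({x | rearr f t < (‖f x‖₊ : ℝ≥0∞)} ∪ {x | rearr g t < (‖g x‖₊ : ℝ≥0∞)}) :=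
        measure_mono hsub
    _ ≤ volume {x | rearr f t < (‖f x‖₊ : ℝ≥0∞)} + volume {x | rearr g t < (‖g x‖₊ : ℝ≥0∞)} :=
        measure_union_le _ _
    _ ≤ ENNReal.ofReal t + ENNReal.ofReal t := add_le_add (rearr_mem f t) (rearr_mem g t)
    _ = ENNReal.ofReal (t + t) := (ENNReal.ofReal_add ht ht).symm

lemma expand_rpow (a b c : ℝ≥0∞) {r : ℝ} (hr : 0 < r) :
    (a * b * c ^ r) ^ (1 / r) = a ^ (1 / r) * b ^ (1 / r) * c := by
  rw [ENNReal.mul_rpow_of_nonneg _ _ (by positivity : (0:ℝ) ≤ 1/r),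
    ENNReal.mul_rpow_of_nonneg _ _ (by positivity : (0:ℝ) ≤ 1/r),
    ← ENNReal.rpow_mul, mul_one_div_cancel hr.ne', ENNReal.rpow_one]

theorem stmt7 {N : ℕ} (q q₁ q₂ α α₁ α₂ : ℝ)
    (hq : 1 ≤ q) (hq₁ : 1 ≤ q₁) (hq₂ : 1 ≤ q₂)
    (hα : 0 ≤ α) (hα₁ : 0 ≤ α₁) (hα₂ : 0 ≤ α₂)
    (hsum : 1 / q = 1 / q₁ + 1 / q₂)
    (hαsum : α / q = α₁ / q₁ + α₂ / q₂) :
    ∃ C : ℝ, 0 < C ∧ ∀ f g : (Fin N → ℝ) → ℝ, Measurable f → Measurable g →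
      wkNorm (fun x => f x * g x) q α ≤
        ENNReal.ofReal C * wkNorm f q₁ α₁ * wkNorm g q₂ α₂ := by
  have hq0 : (0:ℝ) < q := lt_of_lt_of_le one_pos hq
  have hq₁0 : (0:ℝ) < q₁ := lt_of_lt_of_le one_pos hq₁
  have hq₂0 : (0:ℝ) < q₂ := lt_of_lt_of_le one_pos hq₂
  refine ⟨2, two_pos, ?_⟩
  intro f g hf hg
  rw [wkNorm]
  apply iSup₂_le
  intro s hs
  set t := s / 2 with ht_def
  have ht : 0 < t := by positivity
  have hstt : s = t + t := by rw [ht_def]; ring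
  have hs2t : s = 2 * t := by rw [ht_def]; ring
  set F := rearr f t with hF
  set G := rearr g t with hG
  -- submultiplicativity
  have h1 : rearr (fun x => f x * g x) s ≤ F * G := by
    rw [hstt]; exact rearr_submul f g ht.le
  -- Phi facts
  set P := Phi s⁻¹ with hP
  set Q := Phi t⁻¹ with hQ
  have hP1 : (1:ℝ) ≤ P := one_le_Phi (by positivity)
  have hQ1 : (1:ℝ) ≤ Q := one_le_Phi (by positivity)
  have hPQ : P ≤ Q := Phi_mono (by positivity) (by
    rw [ht_def]
    rw [inv_le_inv₀ hs (by positivity)]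
    linarith)
  have hu0 : ENNReal.ofReal t ≠ 0 := (ENNReal.ofReal_pos.mpr ht).ne'
  have hut : ENNReal.ofReal t ≠ ⊤ := ENNReal.ofReal_ne_top
  have hQ0 : ENNReal.ofReal Q ≠ 0 := (ENNReal.ofReal_pos.mpr (by linarith)).ne'
  have hQt : ENNReal.ofReal Q ≠ ⊤ := ENNReal.ofReal_ne_top
  -- coefficient bound
  have hcoeff : ENNReal.ofReal s ^ (1/q) * ENNReal.ofReal (P ^ α) ^ (1/q) ≤
      ENNReal.ofReal 2 * (ENNReal.ofReal t ^ (1/q₁) * ENNReal.ofReal (Q ^ α₁) ^ (1/q₁)) *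
        (ENNReal.ofReal t ^ (1/q₂) * ENNReal.ofReal (Q ^ α₂) ^ (1/q₂)) := by
    have h2 : ENNReal.ofReal s ^ (1/q) =
        ENNReal.ofReal 2 ^ (1/q) * (ENNReal.ofReal t ^ (1/q₁) * ENNReal.ofReal t ^ (1/q₂)) := by
      rw [hs2t, ENNReal.ofReal_mul (by norm_num : (0:ℝ) ≤ 2),
        ENNReal.mul_rpow_of_nonneg _ _ (by positivity : (0:ℝ) ≤ 1/q),
        ← ENNReal.rpow_add _ _ hu0 hut, ← hsum]
    have h3 : ENNReal.ofReal 2 ^ (1/q) ≤ ENNReal.ofReal 2 := by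
      calc ENNReal.ofReal 2 ^ (1/q) ≤ ENNReal.ofReal 2 ^ (1:ℝ) := by
            apply ENNReal.rpow_le_rpow_of_exponent_le
            · rw [show (1:ℝ≥0∞) = ENNReal.ofReal 1 by simp]
              exact ENNReal.ofReal_le_ofReal (by norm_num)
            · rw [div_le_one hq0]; linarith
        _ = ENNReal.ofReal 2 := ENNReal.rpow_one _
    have h4 : ENNReal.ofReal (P ^ α) ^ (1/q) ≤
        ENNReal.ofReal (Q ^ α₁) ^ (1/q₁) * ENNReal.ofReal (Q ^ α₂) ^ (1/q₂) := by
      have hPpos : (0:ℝ) < P := by linarith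
      have hQpos : (0:ℝ) < Q := by linarith
      rw [← ENNReal.ofReal_rpow_of_pos hPpos, ← ENNReal.ofReal_rpow_of_pos hQpos,
        ← ENNReal.ofReal_rpow_of_pos hQpos, ← ENNReal.rpow_mul, ← ENNReal.rpow_mul,
        ← ENNReal.rpow_mul, mul_one_div, mul_one_div, mul_one_div]
      calc ENNReal.ofReal P ^ (α/q) ≤ ENNReal.ofReal Q ^ (α/q) :=
            ENNReal.rpow_le_rpow (ENNReal.ofReal_le_ofReal hPQ) (by positivity)
        _ = ENNReal.ofReal Q ^ (α₁/q₁) * ENNReal.ofReal Q ^ (α₂/q₂) := by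
            rw [hαsum, ENNReal.rpow_add _ _ hQ0 hQt]
    calc ENNReal.ofReal s ^ (1/q) * ENNReal.ofReal (P ^ α) ^ (1/q)
        = ENNReal.ofReal 2 ^ (1/q) * (ENNReal.ofReal t ^ (1/q₁) * ENNReal.ofReal t ^ (1/q₂)) *
            ENNReal.ofReal (P ^ α) ^ (1/q) := by rw [h2]
      _ ≤ ENNReal.ofReal 2 * (ENNReal.ofReal t ^ (1/q₁) * ENNReal.ofReal t ^ (1/q₂)) *
            (ENNReal.ofReal (Q ^ α₁) ^ (1/q₁) * ENNReal.ofReal (Q ^ α₂) ^ (1/q₂)) :=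
          mul_le_mul' (mul_le_mul' h3 le_rfl) h4
      _ = ENNReal.ofReal 2 * (ENNReal.ofReal t ^ (1/q₁) * ENNReal.ofReal (Q ^ α₁) ^ (1/q₁)) *
            (ENNReal.ofReal t ^ (1/q₂) * ENNReal.ofReal (Q ^ α₂) ^ (1/q₂)) := by ring
  -- the two factor bounds
  have hX : (ENNReal.ofReal t * ENNReal.ofReal (Q ^ α₁) * F ^ q₁) ^ (1/q₁) ≤ wkNorm f q₁ α₁ := by
    rw [wkNorm]
    exact le_iSup₂ (f := fun s (_ : 0 < s) =>
      (ENNReal.ofReal s * ENNReal.ofReal (Phi s⁻¹ ^ α₁) * rearr f s ^ q₁) ^ (1/q₁)) t ht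
  have hY : (ENNReal.ofReal t * ENNReal.ofReal (Q ^ α₂) * G ^ q₂) ^ (1/q₂) ≤ wkNorm g q₂ α₂ := by
    rw [wkNorm]
    exact le_iSup₂ (f := fun s (_ : 0 < s) =>
      (ENNReal.ofReal s * ENNReal.ofReal (Phi s⁻¹ ^ α₂) * rearr g s ^ q₂) ^ (1/q₂)) t ht
  -- main chain
  calc (ENNReal.ofReal s * ENNReal.ofReal (P ^ α) * rearr (fun x => f x * g x) s ^ q) ^ (1/q)
      ≤ (ENNReal.ofReal s * ENNReal.ofReal (P ^ α) * (F * G) ^ q) ^ (1/q) := by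
        apply ENNReal.rpow_le_rpow _ (by positivity)
        exact mul_le_mul_right (ENNReal.rpow_le_rpow h1 hq0.le) _
    _ = ENNReal.ofReal s ^ (1/q) * ENNReal.ofReal (P ^ α) ^ (1/q) * (F * G) :=
        expand_rpow _ _ _ hq0
    _ ≤ (ENNReal.ofReal 2 * (ENNReal.ofReal t ^ (1/q₁) * ENNReal.ofReal (Q ^ α₁) ^ (1/q₁)) *
          (ENNReal.ofReal t ^ (1/q₂) * ENNReal.ofReal (Q ^ α₂) ^ (1/q₂))) * (F * G) :=
        mul_le_mul_left hcoeff _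
    _ = ENNReal.ofReal 2 * (ENNReal.ofReal t ^ (1/q₁) * ENNReal.ofReal (Q ^ α₁) ^ (1/q₁) * F) *
          (ENNReal.ofReal t ^ (1/q₂) * ENNReal.ofReal (Q ^ α₂) ^ (1/q₂) * G) := by ring
    _ = ENNReal.ofReal 2 * (ENNReal.ofReal t * ENNReal.ofReal (Q ^ α₁) * F ^ q₁) ^ (1/q₁) *
          (ENNReal.ofReal t * ENNReal.ofReal (Q ^ α₂) * G ^ q₂) ^ (1/q₂) := by
        rw [expand_rpow _ _ _ hq₁0, expand_rpow _ _ _ hq₂0, mul_assoc, mul_assoc]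
    _ ≤ ENNReal.ofReal 2 * wkNorm f q₁ α₁ * wkNorm g q₂ α₂ :=
        mul_le_mul' (mul_le_mul' le_rfl hX) hY
end

section
/- Let r ∈ (1, ∞) and α ∈ [0, ∞). There exists C > 0 such that for every measurable function f on ℝ^N, sup_{s>0} { s (log(e + s⁻¹))^α f**(s)^r }^{1/r} ≤ C ‖f‖_{L^{r,∞}(log L)^α}, where f**(s) := (1/s) ∫₀ˢ f*(τ) dτ. -/
open MeasureTheory ENNReal Set

/-- The maximal (averaged) rearrangement `f**(s) = (1/s)∫₀ˢ f*(τ) dτ`. -/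
noncomputable def rearrStar {E : Type*} [MeasureSpace E] (f : E → ℝ) (s : ℝ) : ℝ≥0∞ :=
  (ENNReal.ofReal s)⁻¹ * ∫⁻ τ in Set.Ioo (0 : ℝ) s, rearr f τ

lemma lint_pow (s p : ℝ) (hs : 0 < s) (hp : -1 < p) :
    ∫⁻ τ in Set.Ioo (0:ℝ) s, ENNReal.ofReal τ ^ p = ENNReal.ofReal (s ^ (p+1) / (p+1)) := by
  have h1 : ∫⁻ τ in Set.Ioo (0:ℝ) s, ENNReal.ofReal τ ^ p
      = ∫⁻ τ in Set.Ioo (0:ℝ) s, ENNReal.ofReal (τ ^ p) := by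
    refine setLIntegral_congr_fun measurableSet_Ioo ?_
    exact fun τ hτ => ENNReal.ofReal_rpow_of_pos hτ.1
  have hint : IntegrableOn (fun τ : ℝ => τ ^ p) (Set.Ioo 0 s) := by
    have h := (intervalIntegral.intervalIntegrable_rpow' (a := 0) (b := s) hp).1
    exact h.mono_set Set.Ioo_subset_Ioc_self
  rw [h1, ← ofReal_integral_eq_lintegral_ofReal hint
    (ae_restrict_of_forall_mem measurableSet_Ioo fun τ hτ => Real.rpow_nonneg hτ.1.le p)]
  congr 1
  rw [← MeasureTheory.integral_Ioc_eq_integral_Ioo, ← intervalIntegral.integral_of_le hs.le,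
    integral_rpow (Or.inl hp)]
  rw [Real.zero_rpow (by linarith : p + 1 ≠ 0)]
  ring

lemma one_le_Phi_s12 {t : ℝ} (ht : 0 ≤ t) : 1 ≤ Phi t := by
  have h : Real.exp 1 ≤ Real.exp 1 + t := by linarith
  calc (1:ℝ) = Real.log (Real.exp 1) := (Real.log_exp 1).symm
    _ ≤ Real.log (Real.exp 1 + t) := Real.log_le_log (Real.exp_pos 1) h

lemma Phi_mono_s12 {a b : ℝ} (ha : 0 ≤ a) (h : a ≤ b) : Phi a ≤ Phi b := by
  have : (0:ℝ) < Real.exp 1 + a := by positivity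
  exact Real.log_le_log this (by linarith)


theorem stmt12 {N : ℕ} (r α : ℝ) (hr : 1 < r) (hα : 0 ≤ α) :
    ∃ C : ℝ, 0 < C ∧ ∀ f : (Fin N → ℝ) → ℝ, Measurable f →
      (⨆ (s : ℝ) (_ : 0 < s),
          (ENNReal.ofReal s * ENNReal.ofReal (Phi s⁻¹ ^ α) * rearrStar f s ^ r) ^ (1 / r)) ≤
        ENNReal.ofReal C *
          ⨆ (s : ℝ) (_ : 0 < s),
            (ENNReal.ofReal s * ENNReal.ofReal (Phi s⁻¹ ^ α) * rearr f s ^ r) ^ (1 / r) := by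
  have hr0 : (0:ℝ) < r := lt_trans one_pos hr
  have hrne : r ≠ 0 := ne_of_gt hr0
  have hodp : (0:ℝ) < 1 / r := by positivity
  set q : ℝ := 1 - 1/r with hq
  have hq_pos : 0 < q := by
    have : 1/r < 1 := by rw [div_lt_one hr0]; exact hr
    simp only [hq]; linarith
  refine ⟨q⁻¹, by positivity, fun f hf => ?_⟩
  set M := ⨆ (s : ℝ) (_ : 0 < s),
      (ENNReal.ofReal s * ENNReal.ofReal (Phi s⁻¹ ^ α) * rearr f s ^ r) ^ (1 / r) with hM
  -- positivity facts for Phi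
  have hPhipos : ∀ t : ℝ, 0 ≤ t → (0:ℝ) < Phi t ^ α := fun t ht =>
    Real.rpow_pos_of_pos (lt_of_lt_of_le one_pos (one_le_Phi_s12 ht)) α
  -- Step A : pointwise bound on rearr
  have key : ∀ τ : ℝ, 0 < τ → rearr f τ ≤
      M * (ENNReal.ofReal τ) ^ (-(1/r)) * (ENNReal.ofReal (Phi τ⁻¹ ^ α)) ^ (-(1/r)) := by
    intro τ hτ
    set A := ENNReal.ofReal τ * ENNReal.ofReal (Phi τ⁻¹ ^ α) with hA
    have hA0 : A ≠ 0 := by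
      apply mul_ne_zero
      · exact (ENNReal.ofReal_pos.2 hτ).ne'
      · exact (ENNReal.ofReal_pos.2 (hPhipos τ⁻¹ (by positivity))).ne'
    have hAt : A ≠ ∞ := ENNReal.mul_ne_top ENNReal.ofReal_ne_top ENNReal.ofReal_ne_top
    have h1 : (A * rearr f τ ^ r) ^ (1/r) ≤ M :=
      le_iSup₂ (f := fun s (_ : 0 < s) =>
        (ENNReal.ofReal s * ENNReal.ofReal (Phi s⁻¹ ^ α) * rearr f s ^ r) ^ (1 / r)) τ hτ
    have h2 : A * rearr f τ ^ r ≤ M ^ r := by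
      have h := ENNReal.rpow_le_rpow h1 hr0.le
      rwa [← ENNReal.rpow_mul, one_div_mul_cancel hrne, ENNReal.rpow_one] at h
    have h3 : rearr f τ ^ r ≤ M ^ r / A := by
      rw [ENNReal.le_div_iff_mul_le (Or.inl hA0) (Or.inl hAt)]
      rwa [mul_comm] at h2
    have h4 : rearr f τ ≤ (M ^ r / A) ^ (1/r) := by
      have h := ENNReal.rpow_le_rpow h3 hodp.le
      rwa [← ENNReal.rpow_mul, mul_one_div_cancel hrne, ENNReal.rpow_one] at h
    have h5 : (M ^ r / A) ^ (1/r) = M * A ^ (-(1/r)) := by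
      rw [div_eq_mul_inv, ENNReal.mul_rpow_of_nonneg _ _ hodp.le, ← ENNReal.rpow_mul,
        mul_one_div_cancel hrne, ENNReal.rpow_one, ENNReal.inv_rpow, ← ENNReal.rpow_neg]
    have h6 : A ^ (-(1/r)) =
        (ENNReal.ofReal τ) ^ (-(1/r)) * (ENNReal.ofReal (Phi τ⁻¹ ^ α)) ^ (-(1/r)) :=
      ENNReal.mul_rpow_of_ne_top ENNReal.ofReal_ne_top ENNReal.ofReal_ne_top _
    calc rearr f τ ≤ (M ^ r / A) ^ (1/r) := h4
      _ = M * (ENNReal.ofReal τ) ^ (-(1/r)) * (ENNReal.ofReal (Phi τ⁻¹ ^ α)) ^ (-(1/r)) := by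
          rw [h5, h6, mul_assoc]
  -- Step C : the integral bound
  have hbound : ∀ s : ℝ, 0 < s →
      (∫⁻ τ in Set.Ioo (0:ℝ) s, rearr f τ) ≤
        M * (ENNReal.ofReal (Phi s⁻¹ ^ α)) ^ (-(1/r)) * ENNReal.ofReal (s ^ q / q) := by
    intro s hs
    set K := (ENNReal.ofReal (Phi s⁻¹ ^ α)) ^ (-(1/r)) with hK
    have hmono : ∀ τ ∈ Set.Ioo (0:ℝ) s,
        rearr f τ ≤ M * K * ENNReal.ofReal τ ^ (-(1/r)) := by
      intro τ hτ
      have hph : Phi s⁻¹ ^ α ≤ Phi τ⁻¹ ^ α := by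
        refine Real.rpow_le_rpow ?_ ?_ hα
        · linarith [one_le_Phi_s12 (inv_pos.2 hs).le]
        · exact Phi_mono_s12 (inv_pos.2 hs).le (inv_anti₀ hτ.1 hτ.2.le)
      have hK' : (ENNReal.ofReal (Phi τ⁻¹ ^ α)) ^ (-(1/r)) ≤ K := by
        rw [hK, ENNReal.rpow_neg, ENNReal.rpow_neg]
        exact ENNReal.inv_le_inv.2
          (ENNReal.rpow_le_rpow (ENNReal.ofReal_le_ofReal hph) hodp.le)
      calc rearr f τ
          ≤ M * (ENNReal.ofReal τ) ^ (-(1/r)) * (ENNReal.ofReal (Phi τ⁻¹ ^ α)) ^ (-(1/r)) :=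
            key τ hτ.1
        _ ≤ M * (ENNReal.ofReal τ) ^ (-(1/r)) * K := mul_le_mul_right hK' _
        _ = M * K * ENNReal.ofReal τ ^ (-(1/r)) := by ring
    have hmeas : Measurable fun τ : ℝ => ENNReal.ofReal τ ^ (-(1/r)) := by
      fun_prop
    calc (∫⁻ τ in Set.Ioo (0:ℝ) s, rearr f τ)
        ≤ ∫⁻ τ in Set.Ioo (0:ℝ) s, M * K * ENNReal.ofReal τ ^ (-(1/r)) :=
          setLIntegral_mono' measurableSet_Ioo hmono
      _ = M * K * ∫⁻ τ in Set.Ioo (0:ℝ) s, ENNReal.ofReal τ ^ (-(1/r)) :=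
          lintegral_const_mul _ hmeas
      _ = M * K * ENNReal.ofReal (s ^ q / q) := by
          have h1r : 1/r < 1 := by rw [div_lt_one hr0]; exact hr
          rw [lint_pow s _ hs (by linarith : (-1:ℝ) < -(1/r))]
          congr 2 <;> · rw [hq]; ring_nf
  -- Final assembly
  rw [mul_comm]
  refine iSup₂_le fun s hs => ?_
  set S := ENNReal.ofReal s with hS
  set P := ENNReal.ofReal (Phi s⁻¹ ^ α) with hP
  have hS0 : S ≠ 0 := (ENNReal.ofReal_pos.2 hs).ne'
  have hSt : S ≠ ∞ := ENNReal.ofReal_ne_top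
  have hP0 : P ≠ 0 := (ENNReal.ofReal_pos.2 (hPhipos s⁻¹ (by positivity))).ne'
  have hPt : P ≠ ∞ := ENNReal.ofReal_ne_top
  have hstar : rearrStar f s ≤ S⁻¹ * (M * P ^ (-(1/r)) * ENNReal.ofReal (s ^ q / q)) := by
    rw [rearrStar, ← hS]
    exact mul_le_mul_right (hbound s hs) _
  have expand : (S * P * rearrStar f s ^ r) ^ (1/r)
      = S ^ (1/r) * P ^ (1/r) * rearrStar f s := by
    rw [ENNReal.mul_rpow_of_nonneg _ _ hodp.le, ENNReal.mul_rpow_of_nonneg _ _ hodp.le,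
      ← ENNReal.rpow_mul, mul_one_div_cancel hrne, ENNReal.rpow_one]
  have hfin : S ^ (1/r) * P ^ (1/r) *
      (S⁻¹ * (M * P ^ (-(1/r)) * ENNReal.ofReal (s ^ q / q))) = M * ENNReal.ofReal q⁻¹ := by
    have e1 : ENNReal.ofReal (s ^ q / q) = S ^ q * ENNReal.ofReal q⁻¹ := by
      rw [div_eq_mul_inv, ENNReal.ofReal_mul (Real.rpow_nonneg hs.le q), hS,
        ENNReal.ofReal_rpow_of_pos hs]
    have e2 : S⁻¹ = S ^ (-1:ℝ) := (ENNReal.rpow_neg_one S).symm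
    rw [e1, e2]
    have e3 : S ^ (1/r) * P ^ (1/r) * (S ^ (-1:ℝ) * (M * P ^ (-(1/r)) *
        (S ^ q * ENNReal.ofReal q⁻¹)))
        = (S ^ (1/r) * S ^ (-1:ℝ) * S ^ q) * (P ^ (1/r) * P ^ (-(1/r))) *
          (M * ENNReal.ofReal q⁻¹) := by ring
    rw [e3, ← ENNReal.rpow_add _ _ hS0 hSt, ← ENNReal.rpow_add _ _ hS0 hSt,
      ← ENNReal.rpow_add _ _ hP0 hPt]
    have : 1/r + (-1:ℝ) + q = 0 := by rw [hq]; ring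
    rw [this, ENNReal.rpow_zero, add_neg_cancel, ENNReal.rpow_zero, one_mul, one_mul]
  calc (S * P * rearrStar f s ^ r) ^ (1/r)
      = S ^ (1/r) * P ^ (1/r) * rearrStar f s := expand
    _ ≤ S ^ (1/r) * P ^ (1/r) *
        (S⁻¹ * (M * P ^ (-(1/r)) * ENNReal.ofReal (s ^ q / q))) := mul_le_mul_right hstar _
    _ = M * ENNReal.ofReal q⁻¹ := hfin
end

section
/- Let N ≥ 1, θ ∈ (0, 2] with N > θ, and let h_t(x) := t^{−N/θ}(1 + t^{−1/θ}|x|)^{−N−θ} for x ∈ ℝ^N, t > 0. Let 1 ≤ r ≤ q < ∞ and γ ∈ ℝ with γ ≥ 0 if r = q. Then there exists C > 0 such that for all t > 0, ∫₀^∞ τ^{q(1 − 1/r)} (log(e + τ⁻¹))^γ (h_t*(τ))^q dτ ≤ C t^{−(Nq/θ)(1/r − 1/q)} (log(e + t⁻¹))^γ. -/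
open MeasureTheory ENNReal Set

/-- The kernel `h_t(x) = t^{-N/θ} (1 + t^{-1/θ}|x|)^{-N-θ}`. -/
noncomputable def hker (N : ℕ) (θ t : ℝ) (x : EuclideanSpace ℝ (Fin N)) : ℝ :=
  t ^ (-((N : ℝ) / θ)) * (1 + t ^ (-(1 / θ)) * ‖x‖) ^ (-((N : ℝ) + θ))

lemma two_le_e : (2:ℝ) ≤ Real.exp 1 := by
  have := Real.add_one_le_exp (1:ℝ); linarith

lemma one_le_Phi_s18 {s : ℝ} (hs : 0 ≤ s) : 1 ≤ Phi s := by
  have h : Real.exp 1 ≤ Real.exp 1 + s := by linarith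
  calc (1:ℝ) = Real.log (Real.exp 1) := (Real.log_exp 1).symm
  _ ≤ Phi s := Real.log_le_log (Real.exp_pos 1) h

lemma Phi_pos {s : ℝ} (hs : 0 ≤ s) : 0 < Phi s := lt_of_lt_of_le one_pos (one_le_Phi_s18 hs)

lemma Phi_mono_s18 {s u : ℝ} (hs : 0 ≤ s) (hsu : s ≤ u) : Phi s ≤ Phi u := by
  have : (0:ℝ) < Real.exp 1 + s := by have := Real.exp_pos 1; linarith
  exact Real.log_le_log this (by linarith)

lemma Phi_mul_le {a b : ℝ} (ha : 0 ≤ a) (hb : 0 ≤ b) : Phi (a * b) ≤ 2 * (Phi a * Phi b) := by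
  have he : (2:ℝ) ≤ Real.exp 1 := two_le_e
  have h1 : Phi (a*b) ≤ Phi a + Phi b := by
    have hpa : (0:ℝ) < Real.exp 1 + a := by linarith
    have hpb : (0:ℝ) < Real.exp 1 + b := by linarith
    have key : Real.exp 1 + a*b ≤ (Real.exp 1 + a) * (Real.exp 1 + b) := by nlinarith
    calc Phi (a*b) ≤ Real.log ((Real.exp 1 + a) * (Real.exp 1 + b)) :=
          Real.log_le_log (by positivity) key
      _ = Phi a + Phi b := Real.log_mul hpa.ne' hpb.ne'
  have h2 : Phi a + Phi b ≤ 2 * (Phi a * Phi b) := by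
    have h1a := one_le_Phi_s18 ha
    have h1b := one_le_Phi_s18 hb
    nlinarith
  linarith

lemma real_add_rpow {a b p : ℝ} (ha : 0 ≤ a) (hb : 0 ≤ b) (hp : 1 ≤ p) :
    a ^ p + b ^ p ≤ (a + b) ^ p := by
  have := NNReal.add_rpow_le_rpow_add a.toNNReal b.toNNReal hp
  have h := NNReal.coe_le_coe.2 this
  rw [NNReal.coe_add, NNReal.coe_rpow, NNReal.coe_rpow, NNReal.coe_rpow, NNReal.coe_add,
    Real.coe_toNNReal a ha, Real.coe_toNNReal b hb] at h
  exact h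

lemma Phi_rpow_le {k u : ℝ} (hk : 1 ≤ k) (hu : 0 ≤ u) : Phi (u ^ k) ≤ k * Phi u := by
  have he : (0:ℝ) < Real.exp 1 := Real.exp_pos 1
  have h1 : Real.exp 1 + u ^ k ≤ (Real.exp 1 + u) ^ k := by
    have h2 : Real.exp 1 ≤ (Real.exp 1) ^ k := by
      calc Real.exp 1 = (Real.exp 1) ^ (1:ℝ) := (Real.rpow_one _).symm
      _ ≤ (Real.exp 1) ^ k := Real.rpow_le_rpow_of_exponent_le (by linarith [two_le_e]) hk
    calc Real.exp 1 + u ^ k ≤ (Real.exp 1) ^ k + u ^ k := by linarith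
    _ ≤ (Real.exp 1 + u) ^ k := real_add_rpow he.le hu hk
  calc Phi (u ^ k) ≤ Real.log ((Real.exp 1 + u) ^ k) := Real.log_le_log (by positivity) h1
  _ = k * Phi u := Real.log_rpow (by linarith) k

lemma le_Phi_rpow {k u : ℝ} (hk : 1 ≤ k) (hu : 0 ≤ u) : Phi u ≤ 2 * Phi (u ^ k) := by
  rcases le_or_gt u 1 with h | h
  · have h1 : Phi u ≤ Phi 1 := Phi_mono_s18 hu h
    have h2 : Phi 1 ≤ 2 := by
      have : Real.exp 1 + 1 ≤ Real.exp 1 ^ (2:ℝ) := by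
        have he := two_le_e
        rw [show (2:ℝ) = ((2:ℕ):ℝ) by norm_num, Real.rpow_natCast]
        nlinarith
      calc Phi 1 ≤ Real.log (Real.exp 1 ^ (2:ℝ)) := Real.log_le_log (by positivity) this
      _ = 2 := by rw [Real.log_rpow (Real.exp_pos 1), Real.log_exp]; ring
    have h3 : 1 ≤ Phi (u ^ k) := one_le_Phi_s18 (Real.rpow_nonneg hu k)
    nlinarith
  · have h1 : u ≤ u ^ k := by
      calc u = u ^ (1:ℝ) := (Real.rpow_one u).symm
      _ ≤ u ^ k := Real.rpow_le_rpow_of_exponent_le h.le hk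
    have h2 : Phi u ≤ Phi (u ^ k) := Phi_mono_s18 hu h1
    have h3 := one_le_Phi_s18 (le_trans hu h1)
    nlinarith

lemma Phi_le_rpow {δ u : ℝ} (hδ : 0 < δ) (hδ1 : δ ≤ 1) (hu : 1 ≤ u) : Phi u ≤ (1 + 2 / δ) * u ^ δ := by
  have hu0 : (0:ℝ) < u := by linarith
  have h1 : Real.log (1 + u) ≤ (2/δ) * u ^ δ := by
    have h2 : Real.log (1 + u) = (1/δ) * Real.log ((1+u) ^ δ) := by
      rw [Real.log_rpow (by linarith)]; field_simp
    have h3 : Real.log ((1+u)^δ) ≤ (1+u)^δ - 1 := Real.log_le_sub_one_of_pos (by positivity)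
    have h4 : (1+u:ℝ)^δ ≤ (2*u) ^ δ := Real.rpow_le_rpow (by linarith) (by linarith) hδ.le
    have h5 : (2*u:ℝ)^δ ≤ 2 * u ^ δ := by
      rw [Real.mul_rpow (by norm_num) hu0.le]
      have h2d : (2:ℝ)^δ ≤ 2 := by
        calc (2:ℝ)^δ ≤ 2 ^ (1:ℝ) := Real.rpow_le_rpow_of_exponent_le (by norm_num) hδ1
        _ = 2 := Real.rpow_one 2
      have : (0:ℝ) ≤ u ^ δ := Real.rpow_nonneg hu0.le δ
      nlinarith
    have hd0 : (0:ℝ) < 1/δ := by positivity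
    calc Real.log (1+u) = (1/δ) * Real.log ((1+u) ^ δ) := h2
    _ ≤ (1/δ) * (2 * u ^ δ) := by
        have : Real.log ((1+u)^δ) ≤ 2 * u ^ δ := by linarith
        exact mul_le_mul_of_nonneg_left this hd0.le
    _ = (2/δ) * u ^ δ := by ring
  have h6 : Phi u ≤ 1 + Real.log (1 + u) := by
    have : Real.exp 1 + u ≤ Real.exp 1 * (1 + u) := by nlinarith [two_le_e, hu0]
    calc Phi u ≤ Real.log (Real.exp 1 * (1+u)) := Real.log_le_log (by positivity) this
    _ = 1 + Real.log (1+u) := by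
        rw [Real.log_mul (Real.exp_pos 1).ne' (by linarith), Real.log_exp]
  have h7 : (1:ℝ) ≤ u ^ δ := Real.one_le_rpow hu hδ.le
  nlinarith

lemma master (k ω γ : ℝ) (hk : 1 ≤ k) (hω : 0 < ω) :
    ∃ K : ℝ, 0 < K ∧ ∀ t σ : ℝ, 0 < t → 0 < σ →
      Phi ((ω * t ^ k * σ)⁻¹) ^ γ ≤ K * Phi t⁻¹ ^ γ * (Phi σ * Phi σ⁻¹) ^ |γ| := by
  rcases le_or_gt 0 γ with hγ | hγ
  · have hC : (0:ℝ) < 4 * k * Phi ω⁻¹ := by nlinarith [Phi_pos (le_of_lt (inv_pos.2 hω))]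
    refine ⟨(4 * k * Phi ω⁻¹) ^ γ, Real.rpow_pos_of_pos hC γ, fun t σ ht hσ => ?_⟩
    have ht' : (0:ℝ) < t⁻¹ := by positivity
    have hX : (ω * t ^ k * σ)⁻¹ = t⁻¹ ^ k * (ω⁻¹ * σ⁻¹) := by
      rw [Real.inv_rpow ht.le]
      field_simp
    have h1 : Phi ((ω * t ^ k * σ)⁻¹) ≤ 4 * k * Phi ω⁻¹ * (Phi t⁻¹ * Phi σ⁻¹) := by
      rw [hX]
      calc Phi (t⁻¹ ^ k * (ω⁻¹ * σ⁻¹)) ≤ 2 * (Phi (t⁻¹ ^ k) * Phi (ω⁻¹ * σ⁻¹)) :=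
            Phi_mul_le (by positivity) (by positivity)
      _ ≤ 2 * ((k * Phi t⁻¹) * (2 * (Phi ω⁻¹ * Phi σ⁻¹))) := by
          have a1 : Phi (t⁻¹ ^ k) ≤ k * Phi t⁻¹ := Phi_rpow_le hk ht'.le
          have a2 : Phi (ω⁻¹ * σ⁻¹) ≤ 2 * (Phi ω⁻¹ * Phi σ⁻¹) :=
            Phi_mul_le (by positivity) (by positivity)
          have p1 : (0:ℝ) < Phi (t⁻¹ ^ k) := Phi_pos (by positivity)
          have p2 : (0:ℝ) < Phi (ω⁻¹ * σ⁻¹) := Phi_pos (by positivity)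
          nlinarith
      _ = 4 * k * Phi ω⁻¹ * (Phi t⁻¹ * Phi σ⁻¹) := by ring
    have hposL : (0:ℝ) ≤ Phi ((ω * t ^ k * σ)⁻¹) := (Phi_pos (by positivity)).le
    have h2 := Real.rpow_le_rpow hposL h1 hγ
    have pt : (0:ℝ) < Phi t⁻¹ := Phi_pos ht'.le
    have ps : (0:ℝ) < Phi σ := Phi_pos hσ.le
    have psi : (0:ℝ) < Phi σ⁻¹ := Phi_pos (by positivity)
    rw [Real.mul_rpow hC.le (by positivity : (0:ℝ) ≤ Phi t⁻¹ * Phi σ⁻¹),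
      Real.mul_rpow pt.le psi.le] at h2
    refine h2.trans ?_
    rw [abs_of_nonneg hγ, Real.mul_rpow ps.le psi.le]
    have h3 : (1:ℝ) ≤ Phi σ ^ γ := Real.one_le_rpow (one_le_Phi_s18 hσ.le) hγ
    have h4 : (0:ℝ) ≤ Phi σ⁻¹ ^ γ := Real.rpow_nonneg psi.le γ
    have h10 : Phi σ⁻¹ ^ γ ≤ Phi σ ^ γ * Phi σ⁻¹ ^ γ := le_mul_of_one_le_left h4 h3
    calc (4 * k * Phi ω⁻¹) ^ γ * (Phi t⁻¹ ^ γ * Phi σ⁻¹ ^ γ)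
        = ((4 * k * Phi ω⁻¹) ^ γ * Phi t⁻¹ ^ γ) * Phi σ⁻¹ ^ γ := by ring
    _ ≤ ((4 * k * Phi ω⁻¹) ^ γ * Phi t⁻¹ ^ γ) * (Phi σ ^ γ * Phi σ⁻¹ ^ γ) := by
        apply mul_le_mul_of_nonneg_left h10
        positivity
  · refine ⟨(8 * Phi ω) ^ (-γ), Real.rpow_pos_of_pos (by nlinarith [Phi_pos hω.le]) _,
      fun t σ ht hσ => ?_⟩
    have ht' : (0:ℝ) < t⁻¹ := by positivity
    set X := (ω * t ^ k * σ)⁻¹ with hXdef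
    have hXpos : 0 < X := by positivity
    have hkey : Phi t⁻¹ ≤ 8 * Phi ω * (Phi X * Phi σ) := by
      have e1 : t⁻¹ ^ k = X * (ω * σ) := by
        rw [hXdef, Real.inv_rpow ht.le]
        field_simp
      calc Phi t⁻¹ ≤ 2 * Phi (t⁻¹ ^ k) := le_Phi_rpow hk ht'.le
      _ = 2 * Phi (X * (ω * σ)) := by rw [e1]
      _ ≤ 2 * (2 * (Phi X * Phi (ω * σ))) := by
          have := @Phi_mul_le X (ω * σ) hXpos.le (by positivity)
          linarith
      _ ≤ 2 * (2 * (Phi X * (2 * (Phi ω * Phi σ)))) := by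
          have a2 : Phi (ω * σ) ≤ 2 * (Phi ω * Phi σ) := Phi_mul_le hω.le hσ.le
          have pX : (0:ℝ) < Phi X := Phi_pos hXpos.le
          nlinarith
      _ = 8 * Phi ω * (Phi X * Phi σ) := by ring
    -- so Phi X ≥ Phi t⁻¹ / (8 Phi ω Phi σ)
    have pX : (0:ℝ) < Phi X := Phi_pos hXpos.le
    have pt : (0:ℝ) < Phi t⁻¹ := Phi_pos ht'.le
    have pω : (0:ℝ) < Phi ω := Phi_pos hω.le
    have ps : (0:ℝ) < Phi σ := Phi_pos hσ.le
    have psi : (0:ℝ) < Phi σ⁻¹ := Phi_pos (by positivity)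
    have hlow : Phi t⁻¹ / (8 * Phi ω * Phi σ) ≤ Phi X := by
      rw [div_le_iff₀ (by positivity)]; nlinarith
    have h2 : Phi X ^ γ ≤ (Phi t⁻¹ / (8 * Phi ω * Phi σ)) ^ γ :=
      Real.rpow_le_rpow_of_nonpos (by positivity) hlow hγ.le
    refine h2.trans ?_
    have e2 : (Phi t⁻¹ / (8 * Phi ω * Phi σ)) ^ γ
        = Phi t⁻¹ ^ γ * ((8 * Phi ω) ^ (-γ) * Phi σ ^ (-γ)) := by
      rw [Real.div_rpow pt.le (by positivity), Real.mul_rpow (by positivity) ps.le,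
        Real.rpow_neg (by positivity : (0:ℝ) ≤ 8 * Phi ω), Real.rpow_neg ps.le]
      field_simp
    rw [e2, abs_of_neg hγ]
    have h5 : Phi σ ^ (-γ) ≤ (Phi σ * Phi σ⁻¹) ^ (-γ) := by
      apply Real.rpow_le_rpow ps.le _ (by linarith)
      nlinarith [one_le_Phi_s18 (le_of_lt (inv_pos.2 hσ))]
    have h6 : (0:ℝ) < (8 * Phi ω) ^ (-γ) := Real.rpow_pos_of_pos (by nlinarith) _
    have h7 : (0:ℝ) < Phi t⁻¹ ^ γ := Real.rpow_pos_of_pos pt γ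
    have h8 : (0:ℝ) < Phi σ ^ (-γ) := Real.rpow_pos_of_pos ps _
    calc Phi t⁻¹ ^ γ * ((8 * Phi ω) ^ (-γ) * Phi σ ^ (-γ))
        = ((8 * Phi ω) ^ (-γ) * Phi t⁻¹ ^ γ) * Phi σ ^ (-γ) := by ring
    _ ≤ ((8 * Phi ω) ^ (-γ) * Phi t⁻¹ ^ γ) * (Phi σ * Phi σ⁻¹) ^ (-γ) :=
        mul_le_mul_of_nonneg_left h5 (by positivity)

lemma key_integrable (a m ν γ : ℝ) (ha : 0 ≤ a) (hν : 0 < ν) (hm : 0 ≤ m)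
    (hlt : a + 1 < ν * m) :
    IntegrableOn (fun σ : ℝ => σ ^ a * (Phi σ * Phi σ⁻¹) ^ |γ| * (1 + σ ^ ν) ^ (-m))
      (Ioi (0:ℝ)) := by
  set δ : ℝ := min 1 (ν * m - (a + 1)) / (2 * (|γ| + 1)) with hδdef
  have hmin : 0 < min 1 (ν * m - (a + 1)) := lt_min one_pos (by linarith)
  have hden : (0:ℝ) < 2 * (|γ| + 1) := by positivity
  have hδ0 : 0 < δ := div_pos hmin hden
  have hδ1 : δ ≤ 1 := by
    rw [hδdef, div_le_one hden]
    have h1 : min 1 (ν * m - (a + 1)) ≤ 1 := min_le_left _ _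
    nlinarith [abs_nonneg γ]
  have hδγ : δ * |γ| ≤ min 1 (ν * m - (a + 1)) / 2 := by
    rw [hδdef, div_mul_eq_mul_div, div_le_div_iff₀ hden (by norm_num)]
    nlinarith [abs_nonneg γ, hmin.le]
  have hδγ1 : δ * |γ| ≤ 1 / 2 := hδγ.trans (by
    apply div_le_div_of_nonneg_right ?_ ?_ <;> [skip; norm_num]
    exact min_le_left _ _)
  have hδγ2 : δ * |γ| ≤ (ν * m - (a + 1)) / 2 := hδγ.trans (by
    apply div_le_div_of_nonneg_right ?_ ?_ <;> [skip; norm_num]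
    exact min_le_right _ _)
  set C1 : ℝ := (Phi 1 * (1 + 2 / δ)) ^ |γ| with hC1def
  have hC1pos : 0 < C1 := Real.rpow_pos_of_pos (mul_pos (Phi_pos zero_le_one) (by positivity)) _
  have hmeas : Measurable fun σ : ℝ =>
      σ ^ a * (Phi σ * Phi σ⁻¹) ^ |γ| * (1 + σ ^ ν) ^ (-m) := by
    unfold Phi
    apply Measurable.mul
    apply Measurable.mul
    · exact measurable_id.pow measurable_const
    · exact ((Real.measurable_log.comp (measurable_const.add measurable_id)).mul
        (Real.measurable_log.comp (measurable_const.add measurable_inv))).pow measurable_const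
    · exact (measurable_const.add (measurable_id.pow measurable_const)).pow measurable_const
  have hnonneg : ∀ σ : ℝ, 0 < σ →
      0 ≤ σ ^ a * (Phi σ * Phi σ⁻¹) ^ |γ| * (1 + σ ^ ν) ^ (-m) := by
    intro σ hσ
    have p1 : 0 < Phi σ := Phi_pos hσ.le
    have p2 : 0 < Phi σ⁻¹ := Phi_pos (by positivity)
    positivity
  rw [show Ioi (0:ℝ) = Ioc 0 1 ∪ Ioi 1 from (Ioc_union_Ioi_eq_Ioi zero_le_one).symm]
  apply IntegrableOn.union
  · -- on Ioc 0 1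
    have hg : IntegrableOn (fun σ : ℝ => C1 * σ ^ (-(1:ℝ)/2)) (Ioc (0:ℝ) 1) := by
      have := (intervalIntegral.intervalIntegrable_rpow' (a := 0) (b := 1)
        (r := -(1:ℝ)/2) (by norm_num)).1
      exact this.const_mul C1
    apply Integrable.mono' hg (hmeas.aestronglyMeasurable.restrict)
    rw [ae_restrict_iff' measurableSet_Ioc]
    apply ae_of_all
    intro σ hσ
    obtain ⟨hσ0, hσ1⟩ := hσ
    have p1 : 0 < Phi σ := Phi_pos hσ0.le
    have p2 : 0 < Phi σ⁻¹ := Phi_pos (by positivity)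
    rw [Real.norm_eq_abs, abs_of_nonneg (hnonneg σ hσ0)]
    have b1 : σ ^ a ≤ 1 := Real.rpow_le_one hσ0.le hσ1 ha
    have b3 : (1 + σ ^ ν) ^ (-m) ≤ 1 :=
      Real.rpow_le_one_of_one_le_of_nonpos
        (by nlinarith [Real.rpow_nonneg hσ0.le ν]) (by linarith)
    have b2 : (Phi σ * Phi σ⁻¹) ^ |γ| ≤ C1 * σ ^ (-(1:ℝ)/2) := by
      have i1 : Phi σ ≤ Phi 1 := Phi_mono_s18 hσ0.le hσ1
      have i2 : Phi σ⁻¹ ≤ (1 + 2 / δ) * σ⁻¹ ^ δ :=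
        Phi_le_rpow hδ0 hδ1 ((one_le_inv₀ hσ0).2 hσ1)
      have i3 : (Phi σ * Phi σ⁻¹) ^ |γ| ≤ (Phi 1 * ((1 + 2/δ) * σ⁻¹ ^ δ)) ^ |γ| := by
        apply Real.rpow_le_rpow (by positivity)
        · exact mul_le_mul i1 i2 p2.le (Phi_pos zero_le_one).le
        · exact abs_nonneg γ
      have i4 : (Phi 1 * ((1 + 2/δ) * σ⁻¹ ^ δ)) ^ |γ| = C1 * σ ^ (-δ * |γ|) := by
        rw [show Phi 1 * ((1 + 2/δ) * σ⁻¹ ^ δ) = (Phi 1 * (1 + 2/δ)) * σ⁻¹ ^ δ by ring,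
          Real.mul_rpow (mul_pos (Phi_pos zero_le_one) (by positivity)).le
            (Real.rpow_nonneg (by positivity) δ),
          Real.inv_rpow hσ0.le, ← Real.rpow_neg hσ0.le, ← Real.rpow_mul hσ0.le]
      have i5 : σ ^ (-δ * |γ|) ≤ σ ^ (-(1:ℝ)/2) := by
        apply Real.rpow_le_rpow_of_exponent_ge hσ0 hσ1
        nlinarith
      calc (Phi σ * Phi σ⁻¹) ^ |γ| ≤ C1 * σ ^ (-δ * |γ|) := i4 ▸ i3
      _ ≤ C1 * σ ^ (-(1:ℝ)/2) := mul_le_mul_of_nonneg_left i5 hC1pos.le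
    calc σ ^ a * (Phi σ * Phi σ⁻¹) ^ |γ| * (1 + σ ^ ν) ^ (-m)
        ≤ 1 * (C1 * σ ^ (-(1:ℝ)/2)) * 1 := by
          apply mul_le_mul (mul_le_mul b1 b2 (by positivity) zero_le_one) b3
            (Real.rpow_nonneg (by nlinarith [Real.rpow_nonneg hσ0.le ν]) _) (by positivity)
    _ = C1 * σ ^ (-(1:ℝ)/2) := by ring
  · -- on Ioi 1
    have hexp : a + δ * |γ| - ν * m < -1 := by linarith
    have hg : IntegrableOn (fun σ : ℝ => C1 * σ ^ (a + δ * |γ| - ν * m)) (Ioi (1:ℝ)) :=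
      (integrableOn_Ioi_rpow_of_lt hexp one_pos).const_mul C1
    apply Integrable.mono' hg (hmeas.aestronglyMeasurable.restrict)
    rw [ae_restrict_iff' measurableSet_Ioi]
    apply ae_of_all
    intro σ hσ
    have hσ0 : (0:ℝ) < σ := lt_trans one_pos hσ
    have hσ1 : (1:ℝ) ≤ σ := (le_of_lt hσ)
    have p1 : 0 < Phi σ := Phi_pos hσ0.le
    have p2 : 0 < Phi σ⁻¹ := Phi_pos (by positivity)
    rw [Real.norm_eq_abs, abs_of_nonneg (hnonneg σ hσ0)]
    have b2 : (Phi σ * Phi σ⁻¹) ^ |γ| ≤ C1 * σ ^ (δ * |γ|) := by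
      have i1 : Phi σ ≤ (1 + 2 / δ) * σ ^ δ := Phi_le_rpow hδ0 hδ1 hσ1
      have i2 : Phi σ⁻¹ ≤ Phi 1 := Phi_mono_s18 (by positivity) (inv_le_one_of_one_le₀ hσ1)
      have i3 : (Phi σ * Phi σ⁻¹) ^ |γ| ≤ ((1 + 2/δ) * σ ^ δ * Phi 1) ^ |γ| := by
        apply Real.rpow_le_rpow (by positivity) (mul_le_mul i1 i2 p2.le (by positivity))
          (abs_nonneg γ)
      have i4 : ((1 + 2/δ) * σ ^ δ * Phi 1) ^ |γ| = C1 * σ ^ (δ * |γ|) := by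
        rw [show (1 + 2/δ) * σ ^ δ * Phi 1 = (Phi 1 * (1 + 2/δ)) * σ ^ δ by ring,
          Real.mul_rpow (mul_pos (Phi_pos zero_le_one) (by positivity)).le
            (Real.rpow_nonneg hσ0.le δ),
          ← Real.rpow_mul hσ0.le]
      exact i4 ▸ i3
    have b3 : (1 + σ ^ ν) ^ (-m) ≤ σ ^ (-(ν * m)) := by
      have h1 : (0:ℝ) < σ ^ ν := Real.rpow_pos_of_pos hσ0 ν
      have h2 : σ ^ ν ≤ 1 + σ ^ ν := by linarith
      calc (1 + σ ^ ν) ^ (-m) ≤ (σ ^ ν) ^ (-m) :=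
            Real.rpow_le_rpow_of_nonpos h1 h2 (by linarith)
      _ = σ ^ (-(ν * m)) := by rw [← Real.rpow_mul hσ0.le, mul_neg]
    calc σ ^ a * (Phi σ * Phi σ⁻¹) ^ |γ| * (1 + σ ^ ν) ^ (-m)
        ≤ σ ^ a * (C1 * σ ^ (δ * |γ|)) * σ ^ (-(ν * m)) := by
          apply mul_le_mul (mul_le_mul_of_nonneg_left b2 (Real.rpow_nonneg hσ0.le a)) b3
            (Real.rpow_nonneg (by nlinarith [Real.rpow_nonneg hσ0.le ν]) _) (by positivity)
    _ = C1 * σ ^ (a + δ * |γ| - ν * m) := by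
        rw [show a + δ * |γ| - ν * m = a + δ * |γ| + (-(ν * m)) by ring,
          Real.rpow_add hσ0, Real.rpow_add hσ0]
        ring


lemma lintegral_Ioi_comp_mul_left (f : ℝ → ℝ≥0∞) (hf : Measurable f) {c : ℝ} (hc : 0 < c) :
    ∫⁻ τ in Ioi (0:ℝ), f τ = ENNReal.ofReal c * ∫⁻ σ in Ioi (0:ℝ), f (c * σ) := by
  have hpre : (fun σ : ℝ => c * σ) ⁻¹' (Ioi 0) = Ioi 0 := by
    ext σ; simp only [mem_preimage, mem_Ioi]
    exact mul_pos_iff_of_pos_left hc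
  have hmap : Measure.map (fun σ : ℝ => c * σ) (volume.restrict (Ioi (0:ℝ)))
      = ENNReal.ofReal c⁻¹ • volume.restrict (Ioi (0:ℝ)) := by
    rw [← hpre, ← Measure.restrict_map (measurable_const_mul c) measurableSet_Ioi,
      Real.map_volume_mul_left hc.ne', abs_inv, abs_of_pos hc, Measure.restrict_smul, hpre]
  calc ∫⁻ τ in Ioi (0:ℝ), f τ
      = 1 * ∫⁻ τ in Ioi (0:ℝ), f τ := (one_mul _).symm
  _ = ENNReal.ofReal c * (ENNReal.ofReal c⁻¹ * ∫⁻ τ in Ioi (0:ℝ), f τ) := by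
      rw [← mul_assoc, ← ENNReal.ofReal_mul hc.le, mul_inv_cancel₀ hc.ne', ENNReal.ofReal_one]
  _ = ENNReal.ofReal c * ∫⁻ σ in Ioi (0:ℝ), f (c * σ) := by
      rw [← smul_eq_mul (ENNReal.ofReal c⁻¹), ← lintegral_smul_measure, ← hmap, lintegral_map hf (measurable_const_mul c)]


lemma hker_pos (N : ℕ) (θ t : ℝ) (ht : 0 < t) (x : EuclideanSpace ℝ (Fin N)) :
    0 < hker N θ t x := by
  unfold hker
  have h1 : (0:ℝ) < 1 + t ^ (-(1/θ)) * ‖x‖ := by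
    have := Real.rpow_pos_of_pos ht (-(1/θ))
    have := norm_nonneg x
    nlinarith
  positivity

lemma rearr_hker_le (N : ℕ) (hN : 1 ≤ N) (θ t τ : ℝ) (hθ : 0 < θ) (hNθ : 0 < (N:ℝ) + θ)
    (ht : 0 < t) (hτ : 0 < τ) :
    rearr (hker N θ t) τ ≤
      ENNReal.ofReal (t ^ (-((N:ℝ)/θ)) *
        (1 + t ^ (-(1/θ)) *
          ((τ / (volume (Metric.ball (0:EuclideanSpace ℝ (Fin N)) 1)).toReal) ^ ((N:ℝ)⁻¹)))
          ^ (-((N:ℝ)+θ))) := by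
  haveI : Nontrivial (EuclideanSpace ℝ (Fin N)) := by
    refine nontrivial_of_ne (EuclideanSpace.single (⟨0, hN⟩ : Fin N) (1:ℝ)) 0 ?_
    intro h
    have := congrArg (fun v => v (⟨0, hN⟩ : Fin N)) h
    simp [EuclideanSpace.single_apply] at this
  set ω : ℝ := (volume (Metric.ball (0:EuclideanSpace ℝ (Fin N)) 1)).toReal with hωdef
  have hωpos : 0 < ω :=
    ENNReal.toReal_pos (Metric.measure_ball_pos volume 0 one_pos).ne' (measure_ball_lt_top).ne
  set ρ : ℝ := (τ / ω) ^ ((N:ℝ)⁻¹) with hρdef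
  have hρpos : 0 < ρ := Real.rpow_pos_of_pos (by positivity) _
  apply sInf_le
  simp only [Set.mem_setOf_eq]
  have hset : {x : EuclideanSpace ℝ (Fin N) |
      ENNReal.ofReal (t ^ (-((N:ℝ)/θ)) * (1 + t ^ (-(1/θ)) * ρ) ^ (-((N:ℝ)+θ)))
        < (‖hker N θ t x‖₊ : ℝ≥0∞)} = Metric.ball (0:EuclideanSpace ℝ (Fin N)) ρ := by
    ext x
    simp only [Set.mem_setOf_eq, Metric.mem_ball, dist_zero_right]
    rw [← enorm_eq_nnnorm, Real.enorm_eq_ofReal (hker_pos N θ t ht x).le,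
      ENNReal.ofReal_lt_ofReal_iff (hker_pos N θ t ht x)]
    unfold hker
    rw [mul_lt_mul_iff_right₀ (Real.rpow_pos_of_pos ht _)]
    have hb1 : (0:ℝ) < 1 + t ^ (-(1/θ)) * ρ := by positivity
    have hb2 : (0:ℝ) < 1 + t ^ (-(1/θ)) * ‖x‖ := by positivity
    rw [Real.rpow_lt_rpow_iff_of_neg hb1 hb2 (by linarith)]
    rw [add_lt_add_iff_left, mul_lt_mul_iff_right₀ (Real.rpow_pos_of_pos ht _)]
  rw [hset]
  rw [Measure.addHaar_ball volume (0:EuclideanSpace ℝ (Fin N)) hρpos.le,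
    finrank_euclideanSpace_fin]
  have hNne : ((N:ℝ)) ≠ 0 := by
    have : (0:ℕ) < N := hN
    exact_mod_cast this.ne'
  have hρN : ρ ^ (N:ℕ) = τ / ω := by
    rw [hρdef, ← Real.rpow_natCast ((τ/ω) ^ ((N:ℝ)⁻¹)) N, ← Real.rpow_mul (by positivity),
      inv_mul_cancel₀ hNne, Real.rpow_one]
  have hvol : volume (Metric.ball (0:EuclideanSpace ℝ (Fin N)) 1) = ENNReal.ofReal ω :=
    (ENNReal.ofReal_toReal (measure_ball_lt_top).ne).symm
  rw [hρN, hvol, ← ENNReal.ofReal_mul (by positivity), div_mul_cancel₀ τ hωpos.ne']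


theorem stmt18 (N : ℕ) (hN : 1 ≤ N) (θ : ℝ) (hθ0 : 0 < θ) (hθ2 : θ ≤ 2) (hθN : θ < N)
    (r q γ : ℝ) (hr : 1 ≤ r) (hrq : r ≤ q) (hγ : r = q → 0 ≤ γ) :
    ∃ C : ℝ, 0 < C ∧ ∀ t : ℝ, 0 < t →
      (∫⁻ τ in Set.Ioi (0 : ℝ),
          ENNReal.ofReal (τ ^ (q * (1 - 1 / r)) * Phi τ⁻¹ ^ γ) * rearr (hker N θ t) τ ^ q) ≤
        ENNReal.ofReal
          (C * t ^ (-((N : ℝ) * q / θ) * (1 / r - 1 / q)) * Phi t⁻¹ ^ γ) := by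
  have hr0 : (0:ℝ) < r := lt_of_lt_of_le one_pos hr
  have hq1 : (1:ℝ) ≤ q := hr.trans hrq
  have hq0 : (0:ℝ) < q := lt_of_lt_of_le one_pos hq1
  have hNpos : (0:ℝ) < N := by
    have : (1:ℝ) ≤ (N:ℝ) := by exact_mod_cast hN
    linarith
  have hNne : ((N:ℝ)) ≠ 0 := hNpos.ne'
  have hNθpos : (0:ℝ) < (N:ℝ) + θ := by linarith
  set k : ℝ := (N:ℝ) / θ with hkdef
  have hk : 1 ≤ k := (one_le_div hθ0).2 hθN.le
  haveI : Nontrivial (EuclideanSpace ℝ (Fin N)) := by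
    refine nontrivial_of_ne (EuclideanSpace.single (⟨0, hN⟩ : Fin N) (1:ℝ)) 0 ?_
    intro h
    have := congrArg (fun v => v (⟨0, hN⟩ : Fin N)) h
    simp [EuclideanSpace.single_apply] at this
  set ω : ℝ := (volume (Metric.ball (0:EuclideanSpace ℝ (Fin N)) 1)).toReal with hωdef
  have hωpos : 0 < ω :=
    ENNReal.toReal_pos (Metric.measure_ball_pos volume 0 one_pos).ne' (measure_ball_lt_top).ne
  obtain ⟨K, hKpos, hmaster⟩ := master k ω γ hk hωpos
  set a : ℝ := q * (1 - 1 / r) with hadef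
  have ha0 : 0 ≤ a := by
    apply mul_nonneg hq0.le
    have : 1 / r ≤ 1 := by rw [div_le_one hr0]; exact hr
    linarith
  set ν : ℝ := ((N:ℝ))⁻¹ with hνdef
  have hν : 0 < ν := by positivity
  set m : ℝ := ((N:ℝ) + θ) * q with hmdef
  have hm : 0 ≤ m := by positivity
  have hqr1 : 1 ≤ q / r := (one_le_div hr0).2 hrq
  have hlt : a + 1 < ν * m := by
    have e1 : ν * m = q + θ * q / N := by rw [hνdef, hmdef]; field_simp
    have e2 : a = q - q / r := by rw [hadef]; field_simp
    have e3 : 0 < θ * q / N := by positivity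
    rw [e1, e2]; linarith
  have hint := key_integrable a m ν γ ha0 hν hm hlt
  set g : ℝ → ℝ := fun σ => σ ^ a * (Phi σ * Phi σ⁻¹) ^ |γ| * (1 + σ ^ ν) ^ (-m) with hgdef
  have hg_nonneg : ∀ σ : ℝ, 0 < σ → 0 ≤ g σ := by
    intro σ hσ
    have p1 : 0 < Phi σ := Phi_pos hσ.le
    have p2 : 0 < Phi σ⁻¹ := Phi_pos (by positivity)
    rw [hgdef]
    positivity
  have hg_meas : Measurable g := by
    rw [hgdef]
    apply Measurable.mul
    apply Measurable.mul
    · exact measurable_id.pow measurable_const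
    · exact ((Real.measurable_log.comp (measurable_const.add measurable_id)).mul
        (Real.measurable_log.comp (measurable_const.add measurable_inv))).pow measurable_const
    · exact (measurable_const.add (measurable_id.pow measurable_const)).pow measurable_const
  set I₀ : ℝ := ∫ σ in Ioi (0:ℝ), g σ with hI0def
  have hI0 : 0 ≤ I₀ := setIntegral_nonneg measurableSet_Ioi fun σ hσ => hg_nonneg σ hσ
  have hglift : ∫⁻ σ in Ioi (0:ℝ), ENNReal.ofReal (g σ) = ENNReal.ofReal I₀ := by
    rw [hI0def, ofReal_integral_eq_lintegral_ofReal hint]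
    filter_upwards [ae_restrict_mem measurableSet_Ioi] with σ hσ
    exact hg_nonneg σ hσ
  refine ⟨ω ^ (1 + a) * K * I₀ + 1, by positivity, fun t ht => ?_⟩
  -- the profile bound
  set prof : ℝ → ℝ := fun τ =>
    t ^ (-((N:ℝ)/θ)) * (1 + t ^ (-(1/θ)) * ((τ / ω) ^ ν)) ^ (-((N:ℝ)+θ)) with hprofdef
  have hprof_nonneg : ∀ τ : ℝ, 0 < τ → 0 ≤ prof τ := by
    intro τ hτ
    have : (0:ℝ) < 1 + t ^ (-(1/θ)) * ((τ / ω) ^ ν) := by positivity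
    rw [hprofdef]
    positivity
  set F : ℝ → ℝ≥0∞ := fun τ =>
    ENNReal.ofReal (τ ^ a * Phi τ⁻¹ ^ γ * prof τ ^ q) with hFdef
  have hF_meas : Measurable F := by
    apply ENNReal.measurable_ofReal.comp
    apply Measurable.mul
    apply Measurable.mul
    · exact measurable_id.pow measurable_const
    · exact (Real.measurable_log.comp (measurable_const.add measurable_inv)).pow
        measurable_const
    · apply Measurable.pow _ measurable_const
      exact measurable_const.mul
        ((measurable_const.add (measurable_const.mul
          ((measurable_id.div_const ω).pow measurable_const))).pow measurable_const)
  have step1 : (∫⁻ τ in Set.Ioi (0 : ℝ),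
      ENNReal.ofReal (τ ^ (q * (1 - 1 / r)) * Phi τ⁻¹ ^ γ) * rearr (hker N θ t) τ ^ q)
      ≤ ∫⁻ τ in Ioi (0:ℝ), F τ := by
    apply setLIntegral_mono hF_meas
    intro τ hτ
    have hτ0 : (0:ℝ) < τ := hτ
    have h1 : rearr (hker N θ t) τ ≤ ENNReal.ofReal (prof τ) := by
      exact rearr_hker_le N hN θ t τ hθ0 hNθpos ht hτ0
    have hw : 0 ≤ τ ^ (q * (1 - 1 / r)) * Phi τ⁻¹ ^ γ := by
      have := Phi_pos (le_of_lt (inv_pos.2 hτ0))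
      positivity
    calc ENNReal.ofReal (τ ^ (q * (1 - 1 / r)) * Phi τ⁻¹ ^ γ) * rearr (hker N θ t) τ ^ q
        ≤ ENNReal.ofReal (τ ^ (q * (1 - 1 / r)) * Phi τ⁻¹ ^ γ)
          * ENNReal.ofReal (prof τ) ^ q := by
          apply mul_le_mul_right
          exact ENNReal.rpow_le_rpow h1 hq0.le
    _ = F τ := by
        rw [hFdef, ENNReal.ofReal_rpow_of_nonneg (hprof_nonneg τ hτ0) hq0.le,
          ← ENNReal.ofReal_mul hw, ← hadef]
  set c : ℝ := ω * t ^ k with hcdef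
  have hc : 0 < c := by positivity
  set Dt : ℝ := ω ^ a * t ^ (k * a) * t ^ (-((N:ℝ)/θ) * q) * (K * Phi t⁻¹ ^ γ) with hDtdef
  have hDt_nonneg : 0 ≤ Dt := by
    have := Phi_pos (le_of_lt (inv_pos.2 ht))
    rw [hDtdef]
    positivity
  have step2 : ∫⁻ τ in Ioi (0:ℝ), F τ
      ≤ ENNReal.ofReal c * (ENNReal.ofReal Dt * ENNReal.ofReal I₀) := by
    rw [lintegral_Ioi_comp_mul_left F hF_meas hc]
    apply mul_le_mul_right
    rw [← hglift]
    have hmono : ∀ σ ∈ Ioi (0:ℝ), F (c * σ) ≤ ENNReal.ofReal Dt * ENNReal.ofReal (g σ) := by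
      intro σ hσ
      have hσ0 : (0:ℝ) < σ := hσ
      have e1 : prof (c * σ) = t ^ (-((N:ℝ)/θ)) * (1 + σ ^ ν) ^ (-((N:ℝ)+θ)) := by
        simp only [hprofdef]
        have e2 : c * σ / ω = t ^ k * σ := by rw [hcdef]; field_simp
        rw [e2]
        have e3 : (t ^ k * σ) ^ ν = t ^ (k * ν) * σ ^ ν := by
          rw [Real.mul_rpow (Real.rpow_nonneg ht.le k) hσ0.le, ← Real.rpow_mul ht.le]
        have e4 : k * ν = 1 / θ := by rw [hkdef, hνdef]; field_simp
        rw [e3, e4, ← mul_assoc, ← Real.rpow_add ht, neg_add_cancel, Real.rpow_zero, one_mul]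
      have e5 : (c * σ) ^ a = ω ^ a * t ^ (k * a) * σ ^ a := by
        rw [hcdef, Real.mul_rpow (by positivity) hσ0.le,
          Real.mul_rpow hωpos.le (Real.rpow_nonneg ht.le k), ← Real.rpow_mul ht.le]
      have e6 : prof (c * σ) ^ q
          = t ^ (-((N:ℝ)/θ) * q) * (1 + σ ^ ν) ^ (-m) := by
        rw [e1, Real.mul_rpow (Real.rpow_nonneg ht.le _) (Real.rpow_nonneg (by positivity) _),
          ← Real.rpow_mul ht.le, ← Real.rpow_mul (by positivity : (0:ℝ) ≤ 1 + σ ^ ν), hmdef]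
        ring_nf
      have hmast : Phi ((c * σ)⁻¹) ^ γ ≤ K * Phi t⁻¹ ^ γ * (Phi σ * Phi σ⁻¹) ^ |γ| := by
        rw [hcdef]
        exact hmaster t σ ht hσ0
      have hb1 : (0:ℝ) ≤ σ ^ ν := Real.rpow_nonneg hσ0.le ν
      have hb2 : (0:ℝ) < 1 + σ ^ ν := by linarith
      have hk0 : (0:ℝ) ≤ ω ^ a * t ^ (k * a) * t ^ (-((N:ℝ)/θ) * q)
          * (σ ^ a * (1 + σ ^ ν) ^ (-m)) := by positivity
      have hreal : (c * σ) ^ a * Phi ((c*σ))⁻¹ ^ γ * prof (c * σ) ^ q ≤ Dt * g σ := by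
        calc (c * σ) ^ a * Phi ((c*σ))⁻¹ ^ γ * prof (c * σ) ^ q
            = (ω ^ a * t ^ (k * a) * t ^ (-((N:ℝ)/θ) * q) * (σ ^ a * (1 + σ ^ ν) ^ (-m)))
              * Phi ((c*σ))⁻¹ ^ γ := by rw [e5, e6]; ring
        _ ≤ (ω ^ a * t ^ (k * a) * t ^ (-((N:ℝ)/θ) * q) * (σ ^ a * (1 + σ ^ ν) ^ (-m)))
              * (K * Phi t⁻¹ ^ γ * (Phi σ * Phi σ⁻¹) ^ |γ|) :=
            mul_le_mul_of_nonneg_left hmast hk0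
        _ = Dt * g σ := by simp only [hDtdef, hgdef]; ring
      calc F (c * σ) ≤ ENNReal.ofReal (Dt * g σ) := by
            rw [hFdef]
            exact ENNReal.ofReal_le_ofReal hreal
      _ = ENNReal.ofReal Dt * ENNReal.ofReal (g σ) := ENNReal.ofReal_mul hDt_nonneg
    calc ∫⁻ σ in Ioi (0:ℝ), F (c * σ)
        ≤ ∫⁻ σ in Ioi (0:ℝ), ENNReal.ofReal Dt * ENNReal.ofReal (g σ) := by
          exact setLIntegral_mono
            (measurable_const.mul (ENNReal.measurable_ofReal.comp hg_meas)) hmono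
    _ = ENNReal.ofReal Dt * ∫⁻ σ in Ioi (0:ℝ), ENNReal.ofReal (g σ) :=
        lintegral_const_mul' _ _ ENNReal.ofReal_ne_top
  refine (step1.trans step2).trans ?_
  rw [← ENNReal.ofReal_mul hDt_nonneg, ← ENNReal.ofReal_mul hc.le]
  apply ENNReal.ofReal_le_ofReal
  have efin : c * Dt * I₀
      = (ω ^ (1 + a) * K * I₀) * t ^ (-((N : ℝ) * q / θ) * (1 / r - 1 / q)) * Phi t⁻¹ ^ γ := by
    have hexp : k + (k * a + -((N:ℝ)/θ) * q) = -((N : ℝ) * q / θ) * (1 / r - 1 / q) := by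
      rw [hkdef, hadef]; field_simp; ring
    rw [hcdef, hDtdef]
    rw [show ω * t ^ k * (ω ^ a * t ^ (k * a) * t ^ (-((N:ℝ)/θ) * q) * (K * Phi t⁻¹ ^ γ)) * I₀
      = (ω * ω ^ a) * (t ^ k * (t ^ (k * a) * t ^ (-((N:ℝ)/θ) * q))) * (K * Phi t⁻¹ ^ γ) * I₀
      by ring]
    rw [← Real.rpow_add ht, ← Real.rpow_add ht, hexp,
      show ω * ω ^ a = ω ^ (1 + a) by rw [Real.rpow_add hωpos, Real.rpow_one]]
    ring
  rw [← mul_assoc, efin]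
  have hfac : 0 ≤ t ^ (-((N : ℝ) * q / θ) * (1 / r - 1 / q)) * Phi t⁻¹ ^ γ := by
    have := Phi_pos (le_of_lt (inv_pos.2 ht))
    positivity
  calc (ω ^ (1 + a) * K * I₀) * t ^ (-((N : ℝ) * q / θ) * (1 / r - 1 / q)) * Phi t⁻¹ ^ γ
      = (ω ^ (1 + a) * K * I₀) * (t ^ (-((N : ℝ) * q / θ) * (1 / r - 1 / q)) * Phi t⁻¹ ^ γ) := by
        ring
  _ ≤ (ω ^ (1 + a) * K * I₀ + 1) * (t ^ (-((N : ℝ) * q / θ) * (1 / r - 1 / q)) * Phi t⁻¹ ^ γ) :=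
      mul_le_mul_of_nonneg_right (by linarith) hfac
  _ = (ω ^ (1 + a) * K * I₀ + 1) * t ^ (-((N : ℝ) * q / θ) * (1 / r - 1 / q)) * Phi t⁻¹ ^ γ := by
      ring
end
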